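/- arXiv:2506.19313 — 3 statements merged into one kernel-verified Lean document; each statement's English description precedes it below -/
import Mathlib

section
/- With w(x) = w₀(β(x)) as above, the second derivative satisfies w''(x) = (2/9) x^{-5/3} + O(x^{-4/3}) and the third derivative satisfies w'''(x) = O(x^{-8/3}) as x → 0⁺. -/
set_option maxHeartbeats 2000000
open Set

lemma myIteratedDerivWithin_of_isOpen {f : ℝ → ℝ} {s : Set ℝ} {n : ℕ} (hs : IsOpen s)
    {x : ℝ} (hx : x ∈ s) : iteratedDerivWithin n f s x = iteratedDeriv n f x := by
  rw [iteratedDerivWithin_eq_iteratedFDerivWithin, iteratedDeriv_eq_iteratedFDeriv,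
    iteratedFDerivWithin_of_isOpen n hs hx]

lemma myHasDerivAt_iteratedDeriv {f : ℝ → ℝ} {s : Set ℝ} (hs : IsOpen s) {k : ℕ}
    (hf : ContDiffOn ℝ 4 f s) (hk : k < 4) {t : ℝ} (ht : t ∈ s) :
    HasDerivAt (iteratedDeriv k f) (iteratedDeriv (k + 1) f t) t := by
  have hd : DifferentiableOn ℝ (iteratedDerivWithin k f s) s :=
    hf.differentiableOn_iteratedDerivWithin (by exact_mod_cast hk) hs.uniqueDiffOn
  have heq : ∀ᶠ y in nhds t, iteratedDerivWithin k f s y = iteratedDeriv k f y := by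
    filter_upwards [hs.mem_nhds ht] with y hy using myIteratedDerivWithin_of_isOpen hs hy
  have hda : DifferentiableAt ℝ (iteratedDeriv k f) t := by
    have := (hd t ht).differentiableAt (hs.mem_nhds ht)
    exact (Filter.EventuallyEq.differentiableAt_iff heq).mp this
  have := hda.hasDerivAt
  rwa [iteratedDeriv_succ]

lemma myContinuousOn_iteratedDeriv {f : ℝ → ℝ} {s : Set ℝ} (hs : IsOpen s)
    (hf : ContDiffOn ℝ 4 f s) : ContinuousOn (iteratedDeriv 4 f) s := by
  have := hf.continuousOn_iteratedDerivWithin (le_refl _) hs.uniqueDiffOn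
  exact this.congr fun y hy => (myIteratedDerivWithin_of_isOpen hs hy).symm

lemma myMvtBound {g g' : ℝ → ℝ} {t B : ℝ} (ht : 0 < t)
    (hder : ∀ s ∈ Icc (0:ℝ) t, HasDerivAt g (g' s) s) (hg0 : g 0 = 0)
    (hB : ∀ s ∈ Ioo (0:ℝ) t, |g' s| ≤ B) : |g t| ≤ B * t := by
  obtain ⟨c, hc, hceq⟩ := exists_hasDerivAt_eq_slope g g' ht
    (fun s hs => (hder s hs).continuousAt.continuousWithinAt)
    (fun s hs => hder s ⟨hs.1.le, hs.2.le⟩)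
  have : g t = g' c * t := by
    rw [hceq, hg0, sub_zero, sub_zero]; field_simp
  rw [this, abs_mul, abs_of_pos ht]
  exact mul_le_mul_of_nonneg_right (hB c hc) ht.le

lemma myContinuousAt_inverse {η β : ℝ → ℝ} {r : ℝ} {U : Set ℝ} (hU : IsOpen U)
    (hmono : StrictMonoOn η (Icc 0 r))
    (hinv : ∀ x ∈ U, η (β x) = x) (hrange : ∀ x ∈ U, β x ∈ Ioo 0 r)
    {x₀ : ℝ} (hx₀ : x₀ ∈ U) : ContinuousAt β x₀ := by
  rw [Metric.continuousAt_iff]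
  intro ε hε
  set b₀ := β x₀ with hb₀
  have hb₀mem := hrange x₀ hx₀
  set ε' : ℝ := min ε (min (b₀ / 2) ((r - b₀) / 2)) with hε'
  have hε'pos : 0 < ε' := by
    apply lt_min hε
    apply lt_min <;> [skip; skip] <;> linarith [hb₀mem.1, hb₀mem.2]
  have hε'ε : ε' ≤ ε := min_le_left _ _
  have hlo : 0 ≤ b₀ - ε' := by
    have h2 : ε' ≤ b₀ / 2 := le_trans (min_le_right _ _) (min_le_left _ _)
    linarith [hb₀mem.1]
  have hhi : b₀ + ε' ≤ r := by
    have h2 : ε' ≤ (r - b₀) / 2 := le_trans (min_le_right _ _) (min_le_right _ _)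
    linarith
  have hb₀Icc : b₀ ∈ Icc (0:ℝ) r := ⟨hb₀mem.1.le, hb₀mem.2.le⟩
  have hloIcc : b₀ - ε' ∈ Icc (0:ℝ) r := ⟨hlo, by linarith [hb₀mem.2]⟩
  have hhiIcc : b₀ + ε' ∈ Icc (0:ℝ) r := ⟨by linarith [hb₀mem.1.le], hhi⟩
  have hx₀eq : η b₀ = x₀ := hinv x₀ hx₀
  have hlt1 : η (b₀ - ε') < x₀ := by
    rw [← hx₀eq]; exact hmono hloIcc hb₀Icc (by linarith)
  have hlt2 : x₀ < η (b₀ + ε') := by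
    rw [← hx₀eq]; exact hmono hb₀Icc hhiIcc (by linarith)
  obtain ⟨δ'', hδ''pos, hball⟩ := Metric.isOpen_iff.mp hU x₀ hx₀
  refine ⟨min δ'' (min (x₀ - η (b₀ - ε')) (η (b₀ + ε') - x₀)), by
    apply lt_min hδ''pos; apply lt_min <;> linarith, ?_⟩
  intro x hx
  rw [Real.dist_eq] at hx
  have hxU : x ∈ U := by
    apply hball
    rw [Metric.mem_ball, Real.dist_eq]
    exact lt_of_lt_of_le hx (min_le_left _ _)
  have hx1 : η (b₀ - ε') < x := by
    have : |x - x₀| < x₀ - η (b₀ - ε') := lt_of_lt_of_le hx (le_trans (min_le_right _ _) (min_le_left _ _))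
    have := abs_lt.mp this
    linarith [this.1]
  have hx2 : x < η (b₀ + ε') := by
    have : |x - x₀| < η (b₀ + ε') - x₀ := lt_of_lt_of_le hx (le_trans (min_le_right _ _) (min_le_right _ _))
    have := abs_lt.mp this
    linarith [this.2]
  have hbmem := hrange x hxU
  have hbIcc : β x ∈ Icc (0:ℝ) r := ⟨hbmem.1.le, hbmem.2.le⟩
  have hxeq : η (β x) = x := hinv x hxU
  have h1 : b₀ - ε' < β x := by
    by_contra h
    push_neg at h
    have := hmono.monotoneOn hbIcc hloIcc h
    rw [hxeq] at this
    linarith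
  have h2 : β x < b₀ + ε' := by
    by_contra h
    push_neg at h
    have := hmono.monotoneOn hhiIcc hbIcc h
    rw [hxeq] at this
    linarith
  rw [Real.dist_eq]
  have : |β x - b₀| < ε' := abs_lt.mpr ⟨by linarith, by linarith⟩
  exact lt_of_lt_of_le this hε'ε


lemma myAbsProd {u v cu cv : ℝ} (hu : |u| ≤ cu) (hv : |v| ≤ cv) : |u * v| ≤ cu * cv := by
  rw [abs_mul]; exact mul_le_mul hu hv (abs_nonneg v) ((abs_nonneg u).trans hu)

lemma myTri8 (a1 a2 a3 a4 a5 a6 a7 a8 : ℝ) :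
    |a1+a2+a3+a4+a5+a6+a7+a8| ≤ |a1|+|a2|+|a3|+|a4|+|a5|+|a6|+|a7|+|a8| := by
  calc |a1+a2+a3+a4+a5+a6+a7+a8| ≤ |a1+a2+a3+a4+a5+a6+a7| + |a8| := abs_add_le _ _
    _ ≤ (|a1+a2+a3+a4+a5+a6| + |a7|) + |a8| := by gcongr; exact abs_add_le _ _
    _ ≤ ((|a1+a2+a3+a4+a5| + |a6|) + |a7|) + |a8| := by gcongr; exact abs_add_le _ _
    _ ≤ (((|a1+a2+a3+a4| + |a5|) + |a6|) + |a7|) + |a8| := by gcongr; exact abs_add_le _ _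
    _ ≤ ((((|a1+a2+a3| + |a4|) + |a5|) + |a6|) + |a7|) + |a8| := by gcongr; exact abs_add_le _ _
    _ ≤ (((((|a1+a2| + |a3|) + |a4|) + |a5|) + |a6|) + |a7|) + |a8| := by gcongr; exact abs_add_le _ _
    _ ≤ ((((((|a1| + |a2|) + |a3|) + |a4|) + |a5|) + |a6|) + |a7|) + |a8| := by gcongr; exact abs_add_le _ _
    _ = |a1|+|a2|+|a3|+|a4|+|a5|+|a6|+|a7|+|a8| := by ring

lemma myKey1 {b M B P A Q : ℝ} (hb : 0 < b) (hB : |B| ≤ M) (hP : |P - 3*b^2| ≤ M*b^3)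
    (hQ : |Q - 6*b| ≤ M*b^2) (hA : |A + 1| ≤ M*b) (hMb : M*b ≤ 1/2) (hM : 1 ≤ M) :
    |9*b^5*(B*P - A*Q) - 2*P^3| ≤ 200*M*b^7 := by
  have hMpos : (0:ℝ) < M := lt_of_lt_of_le one_pos hM
  set p := P - 3*b^2 with hpdef
  set q := Q - 6*b with hqdef
  set e := A + 1 with hedef
  have hb7 : |b^7| = b^7 := abs_of_nonneg (by positivity)
  have hbk : ∀ k : ℕ, |b^k| = b^k := fun k => abs_of_nonneg (by positivity)
  have hid : 9*b^5*(B*P - A*Q) - 2*P^3 =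
      27*B*b^7 + 9*(B*p)*b^5 + 9*q*b^5 + (-54)*e*b^6 + (-9)*(e*q)*b^5
        + (-54)*p*b^4 + (-18)*(p*p)*b^2 + (-2)*(p*(p*p)) := by
    have h1 : P = 3*b^2 + p := by rw [hpdef]; ring
    have h2 : Q = 6*b + q := by rw [hqdef]; ring
    have h3 : A = e - 1 := by rw [hedef]; ring
    rw [h1, h2, h3]; ring
  rw [hid]
  have t1 : |27*B*b^7| ≤ 27*M*b^7 := by
    rw [show (27:ℝ)*B*b^7 = (27*B)*b^7 by ring]
    have := myAbsProd (u := 27*B) (v := b^7) (cu := 27*M) (cv := b^7)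
      (by rw [abs_mul]; rw [show |(27:ℝ)| = 27 by norm_num]; nlinarith) (le_of_eq (hbk 7))
    linarith [this]
  have t2 : |9*(B*p)*b^5| ≤ 9*(M*(M*b^3))*b^5 :=
    myAbsProd (by
      rw [abs_mul, show |(9:ℝ)| = 9 by norm_num]
      have := myAbsProd hB hP
      nlinarith) (le_of_eq (hbk 5))
  have t3 : |9*q*b^5| ≤ 9*(M*b^2)*b^5 :=
    myAbsProd (by
      rw [abs_mul, show |(9:ℝ)| = 9 by norm_num]
      nlinarith [hQ]) (le_of_eq (hbk 5))
  have t4 : |(-54)*e*b^6| ≤ 54*(M*b)*b^6 :=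
    myAbsProd (by
      rw [abs_mul, show |(-54:ℝ)| = 54 by norm_num]
      nlinarith [hA]) (le_of_eq (hbk 6))
  have t5 : |(-9)*(e*q)*b^5| ≤ 9*((M*b)*(M*b^2))*b^5 :=
    myAbsProd (by
      rw [abs_mul, show |(-9:ℝ)| = 9 by norm_num]
      have := myAbsProd hA hQ
      nlinarith) (le_of_eq (hbk 5))
  have t6 : |(-54)*p*b^4| ≤ 54*(M*b^3)*b^4 :=
    myAbsProd (by
      rw [abs_mul, show |(-54:ℝ)| = 54 by norm_num]
      nlinarith [hP]) (le_of_eq (hbk 4))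
  have t7 : |(-18)*(p*p)*b^2| ≤ 18*((M*b^3)*(M*b^3))*b^2 :=
    myAbsProd (by
      rw [abs_mul, show |(-18:ℝ)| = 18 by norm_num]
      have := myAbsProd hP hP
      nlinarith) (le_of_eq (hbk 2))
  have t8 : |(-2)*(p*(p*p))| ≤ 2*((M*b^3)*((M*b^3)*(M*b^3))) := by
    rw [abs_mul, show |(-2:ℝ)| = 2 by norm_num]
    have := myAbsProd hP (myAbsProd hP hP)
    nlinarith
  have tri := myTri8 (27*B*b^7) (9*(B*p)*b^5) (9*q*b^5) ((-54)*e*b^6) ((-9)*(e*q)*b^5)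
    ((-54)*p*b^4) ((-18)*(p*p)*b^2) ((-2)*(p*(p*p)))
  have hsum : 27*M*b^7 + 9*(M*(M*b^3))*b^5 + 9*(M*b^2)*b^5 + 54*(M*b)*b^6
      + 9*((M*b)*(M*b^2))*b^5 + 54*(M*b^3)*b^4 + 18*((M*b^3)*(M*b^3))*b^2
      + 2*((M*b^3)*((M*b^3)*(M*b^3))) ≤ 200*M*b^7 := by
    have e1 : (0:ℝ) < M*b^7 := by positivity
    have e2 : M^2*b^8 ≤ (1/2)*(M*b^7) := by
      calc M^2*b^8 = (M*b)*(M*b^7) := by ring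
        _ ≤ (1/2)*(M*b^7) := mul_le_mul_of_nonneg_right hMb e1.le
    have e3 : M^3*b^9 ≤ (1/2)*(M^2*b^8) := by
      calc M^3*b^9 = (M*b)*(M^2*b^8) := by ring
        _ ≤ (1/2)*(M^2*b^8) := mul_le_mul_of_nonneg_right hMb (by positivity)
    nlinarith [e1, e2, e3]
  refine le_trans tri ?_
  linarith [t1, t2, t3, t4, t5, t6, t7, t8, hsum]

lemma myKey2 {b M A B T P Q R : ℝ} (hb : 0 < b) (hA : |A| ≤ 2) (hB : |B| ≤ M) (hT : |T| ≤ M)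
    (hPlo : 2*b^2 ≤ P) (hPhi : P ≤ 4*b^2) (hQ : |Q| ≤ 7*b) (hR : |R| ≤ 7) (hM : 1 ≤ M)
    (hb1 : b ≤ 1) :
    |(T*P - A*R)*P - 3*(B*P - A*Q)*Q| ≤ 450*M*b^2 := by
  have hMpos : (0:ℝ) < M := lt_of_lt_of_le one_pos hM
  have hPabs : |P| ≤ 4*b^2 := by
    rw [abs_of_nonneg (by nlinarith)]; exact hPhi
  have h1 : |T*P - A*R| ≤ 18*M := by
    have ha := myAbsProd hT hPabs
    have hb' := myAbsProd hA hR
    have htri : |T*P - A*R| ≤ |T*P| + |A*R| := abs_sub _ _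
    have hb2 : b^2 ≤ 1 := by nlinarith [mul_nonneg (sub_nonneg.mpr hb1) hb.le]
    have hM2 : M*b^2 ≤ M := by nlinarith [mul_nonneg hMpos.le (sub_nonneg.mpr hb2)]
    linarith
  have h2 : |B*P - A*Q| ≤ 18*M*b := by
    have ha := myAbsProd hB hPabs
    have hb' := myAbsProd hA hQ
    have htri : |B*P - A*Q| ≤ |B*P| + |A*Q| := abs_sub _ _
    have hMb2 : M*b^2 ≤ M*b := by nlinarith [mul_nonneg (mul_pos hMpos hb).le (sub_nonneg.mpr hb1)]
    have hbM : b ≤ M*b := by nlinarith [mul_nonneg (sub_nonneg.mpr hM) hb.le]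
    linarith
  have h3 : |(T*P - A*R)*P| ≤ 18*M*(4*b^2) := myAbsProd h1 hPabs
  have h4 : |3*(B*P - A*Q)*Q| ≤ 3*(18*M*b)*(7*b) := by
    rw [show 3*(B*P - A*Q)*Q = (3*(B*P-A*Q))*Q by ring]
    refine myAbsProd ?_ hQ
    rw [abs_mul, show |(3:ℝ)| = 3 by norm_num]
    nlinarith [h2]
  have h5 : |(T*P - A*R)*P - 3*(B*P - A*Q)*Q| ≤ |(T*P - A*R)*P| + |3*(B*P - A*Q)*Q| := abs_sub _ _
  nlinarith [h3, h4, h5]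


noncomputable def myF1 (w0 η : ℝ → ℝ) (t : ℝ) : ℝ :=
  iteratedDeriv 1 w0 t / iteratedDeriv 1 η t

noncomputable def myF2 (w0 η : ℝ → ℝ) (t : ℝ) : ℝ :=
  (iteratedDeriv 2 w0 t * iteratedDeriv 1 η t - iteratedDeriv 1 w0 t * iteratedDeriv 2 η t)
    / (iteratedDeriv 1 η t)^3

noncomputable def myF3 (w0 η : ℝ → ℝ) (t : ℝ) : ℝ :=
  ((iteratedDeriv 3 w0 t * iteratedDeriv 1 η t - iteratedDeriv 1 w0 t * iteratedDeriv 3 η t)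
      * iteratedDeriv 1 η t
    - 3 * (iteratedDeriv 2 w0 t * iteratedDeriv 1 η t - iteratedDeriv 1 w0 t * iteratedDeriv 2 η t)
      * iteratedDeriv 2 η t) / (iteratedDeriv 1 η t)^5

lemma myF1_hasDeriv {w0 η : ℝ → ℝ} {t : ℝ}
    (hw1 : HasDerivAt (iteratedDeriv 1 w0) (iteratedDeriv 2 w0 t) t)
    (hη1 : HasDerivAt (iteratedDeriv 1 η) (iteratedDeriv 2 η t) t)
    (hne : iteratedDeriv 1 η t ≠ 0) :
    HasDerivAt (myF1 w0 η)
      ((iteratedDeriv 2 w0 t * iteratedDeriv 1 η t - iteratedDeriv 1 w0 t * iteratedDeriv 2 η t)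
        / (iteratedDeriv 1 η t)^2) t :=
  hw1.div hη1 hne

lemma myF2_hasDeriv {w0 η : ℝ → ℝ} {t : ℝ}
    (hw1 : HasDerivAt (iteratedDeriv 1 w0) (iteratedDeriv 2 w0 t) t)
    (hw2 : HasDerivAt (iteratedDeriv 2 w0) (iteratedDeriv 3 w0 t) t)
    (hη1 : HasDerivAt (iteratedDeriv 1 η) (iteratedDeriv 2 η t) t)
    (hη2 : HasDerivAt (iteratedDeriv 2 η) (iteratedDeriv 3 η t) t)
    (hne : iteratedDeriv 1 η t ≠ 0) :
    HasDerivAt (myF2 w0 η)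
      (((iteratedDeriv 3 w0 t * iteratedDeriv 1 η t - iteratedDeriv 1 w0 t * iteratedDeriv 3 η t)
          * iteratedDeriv 1 η t
        - 3 * (iteratedDeriv 2 w0 t * iteratedDeriv 1 η t
          - iteratedDeriv 1 w0 t * iteratedDeriv 2 η t) * iteratedDeriv 2 η t)
        / (iteratedDeriv 1 η t)^4) t := by
  have hN : HasDerivAt
      (fun s => iteratedDeriv 2 w0 s * iteratedDeriv 1 η s
        - iteratedDeriv 1 w0 s * iteratedDeriv 2 η s)
      ((iteratedDeriv 3 w0 t * iteratedDeriv 1 η t + iteratedDeriv 2 w0 t * iteratedDeriv 2 η t)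
        - (iteratedDeriv 2 w0 t * iteratedDeriv 2 η t + iteratedDeriv 1 w0 t * iteratedDeriv 3 η t)) t :=
    (hw2.mul hη1).sub (hw1.mul hη2)
  have hD : HasDerivAt (fun s => (iteratedDeriv 1 η s)^3)
      ((3:ℕ) * (iteratedDeriv 1 η t)^2 * iteratedDeriv 2 η t) t := by
    have := hη1.pow 3
    norm_num at this ⊢
    exact this
  have hD3ne : (iteratedDeriv 1 η t)^3 ≠ 0 := pow_ne_zero _ hne
  have := hN.div hD hD3ne
  refine this.congr_deriv ?_
  symm
  rw [div_eq_div_iff (pow_ne_zero 4 hne) (pow_ne_zero 2 (pow_ne_zero 3 hne))]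
  push_cast
  ring


lemma myFinal1 {b s M C₁ A B P Q : ℝ} (hbpos : 0 < b) (hspos : 0 < s) (hM : 1 ≤ M) (hC₁ : 1 ≤ C₁)
    (hblo : s/2 ≤ b) (hbhi : b ≤ 2*s) (hbs : |b - s| ≤ C₁*s^2)
    (hnum : |9*b^5*(B*P - A*Q) - 2*P^3| ≤ 200*M*b^7)
    (hPlo : 2*b^2 ≤ P) :
    |(B*P - A*Q)/P^3 - 2/9 * (s^5)⁻¹| ≤ (4000*(M+C₁)) * (s^4)⁻¹ := by
  have hMpos : (0:ℝ) < M := lt_of_lt_of_le one_pos hM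
  have hC₁pos : (0:ℝ) < C₁ := lt_of_lt_of_le one_pos hC₁
  have hPpos : 0 < P := lt_of_lt_of_le (by positivity) hPlo
  have est1 : |(B*P - A*Q)/P^3 - 2/9*(b^5)⁻¹| ≤ 48*M*(s^4)⁻¹ := by
    have heq : (B*P - A*Q)/P^3 - 2/9 * (b^5)⁻¹ = (9*b^5*(B*P - A*Q) - 2*P^3) / (9*b^5*P^3) := by
      field_simp
    rw [heq, abs_div, abs_of_pos (show (0:ℝ) < 9*b^5*P^3 by positivity)]
    have hden : 72*b^11 ≤ 9*b^5*P^3 := by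
      have h8 : (2*b^2)^3 ≤ P^3 := pow_le_pow_left₀ (by positivity) hPlo 3
      nlinarith [pow_pos hbpos 5]
    have hstep1 : |9*b^5*(B*P - A*Q) - 2*P^3| / (9*b^5*P^3) ≤ (200*M*b^7)/(72*b^11) :=
      div_le_div₀ (by positivity) hnum (by positivity) hden
    refine le_trans hstep1 ?_
    have hstep2 : (200*M*b^7)/(72*b^11) ≤ 3*M/b^4 := by
      rw [div_le_div_iff₀ (by positivity) (by positivity)]
      nlinarith [pow_pos hbpos 11, hMpos]
    refine le_trans hstep2 ?_
    have hb4 : s^4 ≤ 16*b^4 := by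
      have h5 : (s/2)^4 ≤ b^4 := pow_le_pow_left₀ (by positivity) hblo 4
      nlinarith
    rw [show 48*M*(s^4)⁻¹ = 48*M/s^4 by rw [div_eq_mul_inv]]
    rw [div_le_div_iff₀ (by positivity) (by positivity)]
    nlinarith [hMpos, pow_pos hbpos 4, pow_pos hspos 4]
  have est2 : |2/9*((b^5)⁻¹ - (s^5)⁻¹)| ≤ 600*C₁*(s^4)⁻¹ := by
    have hfacpos : (0:ℝ) < b^5*s^5 := by positivity
    have heq2 : (b^5)⁻¹ - (s^5)⁻¹ = (s^5 - b^5)/(b^5*s^5) := by field_simp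
    have hnum2 : |s^5 - b^5| ≤ 31*C₁*s^6 := by
      have hfactor : s^5 - b^5 = (s - b)*(s^4 + s^3*b + s^2*b^2 + s*b^3 + b^4) := by ring
      rw [hfactor, abs_mul]
      have h1 : |s - b| ≤ C₁*s^2 := by rw [abs_sub_comm]; exact hbs
      have hb2 : b^2 ≤ 4*s^2 := by nlinarith
      have hb3 : b^3 ≤ 8*s^3 := by nlinarith [hb2, hbpos, hspos, sq_nonneg b]
      have hb4 : b^4 ≤ 16*s^4 := by nlinarith [hb2, sq_nonneg (b^2), sq_nonneg (s^2)]
      have e1 : (0:ℝ) < s^3*b := mul_pos (pow_pos hspos 3) hbpos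
      have e2 : (0:ℝ) < s^2*b^2 := mul_pos (pow_pos hspos 2) (pow_pos hbpos 2)
      have e3 : (0:ℝ) < s*b^3 := mul_pos hspos (pow_pos hbpos 3)
      have hpos : (0:ℝ) ≤ s^4 + s^3*b + s^2*b^2 + s*b^3 + b^4 := by
        have := pow_pos hspos 4; have := pow_pos hbpos 4; linarith
      have h2 : |s^4 + s^3*b + s^2*b^2 + s*b^3 + b^4| ≤ 31*s^4 := by
        rw [abs_of_nonneg hpos]
        have f2 : s^3*b ≤ 2*s^4 := by nlinarith [pow_pos hspos 3]
        have f3 : s^2*b^2 ≤ 4*s^4 := by nlinarith [pow_pos hspos 2]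
        have f4 : s*b^3 ≤ 8*s^4 := by nlinarith [hspos, hb3]
        linarith [hb4]
      calc |s - b| * |s^4 + s^3*b + s^2*b^2 + s*b^3 + b^4| ≤ (C₁*s^2)*(31*s^4) :=
            mul_le_mul h1 h2 (abs_nonneg _) (by positivity)
        _ = 31*C₁*s^6 := by ring
    rw [heq2, abs_mul, abs_div (s^5 - b^5) (b^5*s^5), abs_of_pos hfacpos,
      show |(2:ℝ)/9| = 2/9 by norm_num]
    have hden2 : s^10/32 ≤ b^5*s^5 := by
      have h5 : (s/2)^5 ≤ b^5 := pow_le_pow_left₀ (by positivity) hblo 5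
      nlinarith [pow_pos hspos 5]
    have hstep : |s^5 - b^5| / (b^5*s^5) ≤ (31*C₁*s^6)/(s^10/32) :=
      div_le_div₀ (by positivity) hnum2 (by positivity) hden2
    have hcalc : (31*C₁*s^6)/(s^10/32) = 992*C₁*(s^4)⁻¹ := by
      field_simp
      ring
    have hle : 2/9*((31*C₁*s^6)/(s^10/32)) ≤ 600*C₁*(s^4)⁻¹ := by
      rw [hcalc]
      have hu : (0:ℝ) ≤ (s^4)⁻¹ := by positivity
      nlinarith [mul_nonneg hu hC₁pos.le]
    calc (2:ℝ)/9 * (|s^5 - b^5| / (b^5*s^5)) ≤ 2/9*((31*C₁*s^6)/(s^10/32)) := by linarith [hstep]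
      _ ≤ 600*C₁*(s^4)⁻¹ := hle
  have hsplit : (B*P - A*Q)/P^3 - 2/9*(s^5)⁻¹ =
      ((B*P - A*Q)/P^3 - 2/9*(b^5)⁻¹) + 2/9*((b^5)⁻¹ - (s^5)⁻¹) := by ring
  rw [hsplit]
  refine le_trans (abs_add_le _ _) ?_
  have hu : (0:ℝ) ≤ (s^4)⁻¹ := by positivity
  nlinarith [est1, est2, mul_nonneg hu hMpos.le, mul_nonneg hu hC₁pos.le]

lemma myFinal2 {b s M C₁ A B T P Q R : ℝ} (hbpos : 0 < b) (hspos : 0 < s) (hM : 1 ≤ M)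
    (hC₁ : 1 ≤ C₁) (hblo : s/2 ≤ b)
    (hnum : |(T*P - A*R)*P - 3*(B*P - A*Q)*Q| ≤ 450*M*b^2)
    (hPlo : 2*b^2 ≤ P) :
    |((T*P - A*R)*P - 3*(B*P - A*Q)*Q)/P^5| ≤ (4000*(M+C₁)) * (s^8)⁻¹ := by
  have hMpos : (0:ℝ) < M := lt_of_lt_of_le one_pos hM
  have hC₁pos : (0:ℝ) < C₁ := lt_of_lt_of_le one_pos hC₁
  have hPpos : 0 < P := lt_of_lt_of_le (by positivity) hPlo
  rw [abs_div, abs_of_pos (pow_pos hPpos 5)]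
  have hden : 32*b^10 ≤ P^5 := by
    have := pow_le_pow_left₀ (by positivity : (0:ℝ) ≤ 2*b^2) hPlo 5
    nlinarith
  have hstep1 : |(T*P - A*R)*P - 3*(B*P - A*Q)*Q| / P^5 ≤ (450*M*b^2)/(32*b^10) :=
    div_le_div₀ (by positivity) hnum (by positivity) hden
  refine le_trans hstep1 ?_
  have hstep2 : (450*M*b^2)/(32*b^10) ≤ 15*M/b^8 := by
    rw [div_le_div_iff₀ (by positivity) (by positivity)]
    nlinarith [hMpos, pow_pos hbpos 10]
  refine le_trans hstep2 ?_
  have hb8 : s^8 ≤ 256*b^8 := by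
    have h5 : (s/2)^8 ≤ b^8 := pow_le_pow_left₀ (by positivity) hblo 8
    nlinarith
  have hstep3 : 15*M/b^8 ≤ 3840*M/s^8 := by
    rw [div_le_div_iff₀ (by positivity) (by positivity)]
    nlinarith [hMpos, pow_pos hbpos 8, pow_pos hspos 8]
  refine le_trans hstep3 ?_
  rw [show 3840*M/s^8 = 3840*M*(s^8)⁻¹ by rw [div_eq_mul_inv]]
  have hu : (0:ℝ) ≤ (s^8)⁻¹ := by positivity
  nlinarith [mul_nonneg hu hMpos.le, mul_nonneg hu hC₁pos.le]

lemma myBnds {bb M P Q R A : ℝ} (hb : 0 < bb) (hM : 1 ≤ M) (hMb : M*bb ≤ 1/2)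
    (hP : |P - 3*bb^2| ≤ M*bb^3) (hQ : |Q - 6*bb| ≤ M*bb^2) (hR : |R - 6| ≤ M*bb)
    (hA : |A + 1| ≤ M*bb) :
    bb ≤ 1 ∧ 2*bb^2 ≤ P ∧ P ≤ 4*bb^2 ∧ |Q| ≤ 7*bb ∧ |R| ≤ 7 ∧ |A| ≤ 2 := by
  have hb1 : bb ≤ 1 := by nlinarith [mul_nonneg (sub_nonneg.mpr hM) hb.le]
  have hPlo : 2*bb^2 ≤ P := by
    nlinarith [abs_le.mp hP, mul_le_mul_of_nonneg_right hMb (sq_nonneg bb)]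
  have hPhi : P ≤ 4*bb^2 := by
    nlinarith [abs_le.mp hP, mul_le_mul_of_nonneg_right hMb (sq_nonneg bb)]
  have hQabs : |Q| ≤ 7*bb := by
    have h := abs_le.mp hQ
    rw [abs_le]
    constructor <;> nlinarith [mul_le_mul_of_nonneg_right hMb hb.le]
  have hRabs : |R| ≤ 7 := by
    have h := abs_le.mp hR
    rw [abs_le]; constructor <;> nlinarith
  have hAabs : |A| ≤ 2 := by
    have h := abs_le.mp hA
    rw [abs_le]; constructor <;> nlinarith
  exact ⟨hb1, hPlo, hPhi, hQabs, hRabs, hAabs⟩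

set_option maxHeartbeats 2000000 in
/-- Higher derivatives of the pre-shock profile `w(x) = w₀(β(x))`:
`w''(x) = (2/9) x^{-5/3} + O(x^{-4/3})` and `w'''(x) = O(x^{-8/3})` as `x → 0⁺`. -/
theorem stmt5 (w0 η β : ℝ → ℝ) (δ₀ α₂ α₃ C₀ : ℝ) (hδ₀ : 0 < δ₀) (hC₀ : 0 < C₀)
    (hw0 : ContDiffOn ℝ 4 w0 (Set.Ioo (-δ₀) δ₀)) (hw00 : w0 0 = 0) (hw01 : deriv w0 0 = -1)
    (hη : ContDiffOn ℝ 4 η (Set.Ioo (-δ₀) δ₀)) (hη0 : η 0 = 0) (hη1 : deriv η 0 = 0)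
    (hη2 : iteratedDeriv 2 η 0 = 0) (hη3 : iteratedDeriv 3 η 0 = 6)
    (hβ : ∀ x ∈ Set.Ioo (0 : ℝ) δ₀, η (β x) = x ∧
      |β x - (x ^ ((1:ℝ)/3) + α₂ * x ^ ((2:ℝ)/3) + α₃ * x)| ≤ C₀ * x ^ ((4:ℝ)/3)) :
    ∃ δ > 0, ∃ C > 0, ∀ x ∈ Set.Ioo (0 : ℝ) δ,
      |iteratedDeriv 2 (fun y => w0 (β y)) x - (2/9) * x ^ (-(5:ℝ)/3)|
        ≤ C * x ^ (-(4:ℝ)/3) ∧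
      |iteratedDeriv 3 (fun y => w0 (β y)) x| ≤ C * x ^ (-(8:ℝ)/3) := by
  have hSopen : IsOpen (Set.Ioo (-δ₀) δ₀) := isOpen_Ioo
  have h0S : (0:ℝ) ∈ Set.Ioo (-δ₀) δ₀ := by constructor <;> linarith
  -- derivative facts
  have hw0d : ∀ k, k < 4 → ∀ t ∈ Set.Ioo (-δ₀) δ₀,
      HasDerivAt (iteratedDeriv k w0) (iteratedDeriv (k+1) w0 t) t :=
    fun k hk t ht => myHasDerivAt_iteratedDeriv hSopen hw0 hk ht
  have hηd : ∀ k, k < 4 → ∀ t ∈ Set.Ioo (-δ₀) δ₀,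
      HasDerivAt (iteratedDeriv k η) (iteratedDeriv (k+1) η t) t :=
    fun k hk t ht => myHasDerivAt_iteratedDeriv hSopen hη hk ht
  -- bounds on a compact subinterval
  set r : ℝ := δ₀ / 2 with hr
  have hrpos : 0 < r := by positivity
  have hIccS : Icc (-r) r ⊆ Set.Ioo (-δ₀) δ₀ := by
    intro t ht
    simp only [mem_Icc] at ht
    constructor <;> [linarith [ht.1]; linarith [ht.2]]
  have hIcc0S : Icc (0:ℝ) r ⊆ Set.Ioo (-δ₀) δ₀ := by
    intro t ht; exact hIccS ⟨by linarith [ht.1], ht.2⟩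
  obtain ⟨M2, hM2⟩ := (isCompact_Icc (a := -r) (b := r)).exists_bound_of_continuousOn
    (fun t ht => ((hw0d 2 (by norm_num) t (hIccS ht)).continuousAt).continuousWithinAt)
  obtain ⟨M3, hM3⟩ := (isCompact_Icc (a := -r) (b := r)).exists_bound_of_continuousOn
    (fun t ht => ((hw0d 3 (by norm_num) t (hIccS ht)).continuousAt).continuousWithinAt)
  obtain ⟨M4, hM4⟩ := (isCompact_Icc (a := -r) (b := r)).exists_bound_of_continuousOn
    ((myContinuousOn_iteratedDeriv hSopen hη).mono hIccS)
  set M : ℝ := max 1 (max M2 (max M3 M4)) with hM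
  have hM1 : 1 ≤ M := le_max_left _ _
  have hMpos : 0 < M := lt_of_lt_of_le one_pos hM1
  have hbw2 : ∀ t ∈ Icc (-r) r, |iteratedDeriv 2 w0 t| ≤ M := fun t ht =>
    le_trans (hM2 t ht) (le_trans (le_max_left _ _) (le_max_right _ _))
  have hbw3 : ∀ t ∈ Icc (-r) r, |iteratedDeriv 3 w0 t| ≤ M := fun t ht =>
    le_trans (hM3 t ht) (le_trans (le_trans (le_max_left _ _) (le_max_right _ _)) (le_max_right _ _))
  have hbη4 : ∀ t ∈ Icc (-r) r, |iteratedDeriv 4 η t| ≤ M := fun t ht =>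
    le_trans (hM4 t ht) (le_trans (le_trans (le_max_right _ _) (le_max_right _ _)) (le_max_right _ _))
  have hsub : ∀ t ∈ Icc (0:ℝ) r, Icc (0:ℝ) t ⊆ Set.Ioo (-δ₀) δ₀ := by
    intro t ht s hs
    exact hIcc0S ⟨hs.1, le_trans hs.2 ht.2⟩
  have hmem' : ∀ t ∈ Icc (0:ℝ) r, ∀ s ∈ Icc (0:ℝ) t, s ∈ Icc (-r) r := by
    intro t ht s hs
    exact ⟨by linarith [hs.1], le_trans hs.2 ht.2⟩
  -- Taylor-type estimates
  have E3η : ∀ t ∈ Icc (0:ℝ) r, |iteratedDeriv 3 η t - 6| ≤ M * t := by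
    intro t ht
    rcases eq_or_lt_of_le ht.1 with h0 | h0
    · simp [← h0, hη3]
    · exact myMvtBound h0
        (fun s hs => (hηd 3 (by norm_num) s (hsub t ht hs)).sub_const 6)
        (by simp [hη3])
        (fun s hs => hbη4 s (hmem' t ht s ⟨hs.1.le, hs.2.le⟩))
  have E2η : ∀ t ∈ Icc (0:ℝ) r, |iteratedDeriv 2 η t - 6 * t| ≤ M * t ^ 2 := by
    intro t ht
    rcases eq_or_lt_of_le ht.1 with h0 | h0
    · simp [← h0, hη2]
    · have := myMvtBound (g := fun s => iteratedDeriv 2 η s - 6 * s)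
        (g' := fun s => iteratedDeriv 3 η s - 6) h0
        (fun s hs => by
          exact ((hηd 2 (by norm_num) s (hsub t ht hs)).sub
            ((hasDerivAt_id' s).const_mul 6)).congr_deriv (by ring))
        (by simp [hη2])
        (B := M * t)
        (fun s hs => le_trans (E3η s ⟨hs.1.le, le_trans hs.2.le ht.2⟩)
          (by nlinarith [hs.1, hs.2, hMpos]))
      calc |iteratedDeriv 2 η t - 6 * t| ≤ M * t * t := this
        _ = M * t ^ 2 := by ring
  have E1η : ∀ t ∈ Icc (0:ℝ) r, |iteratedDeriv 1 η t - 3 * t ^ 2| ≤ M * t ^ 3 := by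
    intro t ht
    rcases eq_or_lt_of_le ht.1 with h0 | h0
    · simp [← h0, iteratedDeriv_one, hη1]
    · have := myMvtBound (g := fun s => iteratedDeriv 1 η s - 3 * s ^ 2)
        (g' := fun s => iteratedDeriv 2 η s - 6 * s) h0
        (fun s hs => by
          have h1 := (hηd 1 (by norm_num) s (hsub t ht hs))
          have h2 : HasDerivAt (fun s : ℝ => 3 * s ^ 2) (6 * s) s := by
            exact ((hasDerivAt_pow 2 s).const_mul 3).congr_deriv (by push_cast; ring)
          exact h1.sub h2)
        (by simp [iteratedDeriv_one, hη1])
        (B := M * t ^ 2)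
        (fun s hs => le_trans (E2η s ⟨hs.1.le, le_trans hs.2.le ht.2⟩)
          (by have h2 : s^2 ≤ t^2 := by nlinarith [hs.1, hs.2]
              nlinarith [hMpos]))
      calc |iteratedDeriv 1 η t - 3 * t ^ 2| ≤ M * t ^ 2 * t := this
        _ = M * t ^ 3 := by ring
  have E1w : ∀ t ∈ Icc (0:ℝ) r, |iteratedDeriv 1 w0 t + 1| ≤ M * t := by
    intro t ht
    rcases eq_or_lt_of_le ht.1 with h0 | h0
    · simp [← h0, iteratedDeriv_one, hw01]
    · exact myMvtBound h0
        (fun s hs => (hw0d 1 (by norm_num) s (hsub t ht hs)).add_const 1)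
        (by show iteratedDeriv 1 w0 0 + 1 = 0
            rw [iteratedDeriv_one, hw01]; ring)
        (fun s hs => hbw2 s (hmem' t ht s ⟨hs.1.le, hs.2.le⟩))
  -- constants
  set C₁ : ℝ := |α₂| + |α₃| + C₀ + 1 with hC₁def
  have hC₁1 : 1 ≤ C₁ := by
    have := abs_nonneg α₂; have := abs_nonneg α₃; simp only [hC₁def]; nlinarith
  have hC₁pos : 0 < C₁ := lt_of_lt_of_le one_pos hC₁1
  set s₀ : ℝ := min (δ₀/4) (min (1/(2*C₁)) (1/(4*M))) with hs₀def
  have hs₀pos : 0 < s₀ := lt_min (by positivity) (lt_min (by positivity) (by positivity))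
  have hs₀a : s₀ ≤ δ₀/4 := min_le_left _ _
  have hs₀b : s₀ ≤ 1/(2*C₁) := le_trans (min_le_right _ _) (min_le_left _ _)
  have hs₀c : s₀ ≤ 1/(4*M) := le_trans (min_le_right _ _) (min_le_right _ _)
  have hr'r : 2*s₀ ≤ r := by rw [hr]; linarith
  set δ : ℝ := min δ₀ (s₀^3) with hδdef
  have hδpos : 0 < δ := lt_min hδ₀ (by positivity)
  have hδδ₀ : δ ≤ δ₀ := min_le_left _ _
  -- facts about β y for y ∈ (0, δ)
  have hyfact : ∀ y ∈ Ioo (0:ℝ) δ, η (β y) = y ∧ β y ∈ Ioo 0 (2*s₀) ∧ M * β y ≤ 1/2 ∧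
      (y^((1:ℝ)/3))/2 ≤ β y ∧ β y ≤ 2*(y^((1:ℝ)/3)) ∧
      |β y - y^((1:ℝ)/3)| ≤ C₁ * (y^((1:ℝ)/3))^2 := by
    intro y hy
    have hy0 : 0 < y := hy.1
    obtain ⟨he, hb⟩ := hβ y ⟨hy0, lt_of_lt_of_le hy.2 hδδ₀⟩
    set sy : ℝ := y ^ ((1:ℝ)/3) with hsydef
    have hsy : 0 < sy := Real.rpow_pos_of_pos hy0 _
    have hsy3 : sy ^ (3:ℕ) = y := by
      rw [hsydef, ← Real.rpow_natCast (y ^ ((1:ℝ)/3)) 3, ← Real.rpow_mul hy0.le]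
      norm_num
    have hsys₀ : sy < s₀ := by
      by_contra h
      push_neg at h
      have := pow_le_pow_left₀ hs₀pos.le h 3
      have hyδ : y < s₀^3 := lt_of_lt_of_le hy.2 (min_le_right _ _)
      nlinarith
    have hsy1 : sy ≤ 1 := by
      have : s₀ ≤ 1/2 := le_trans hs₀b (by rw [div_le_div_iff₀ (by positivity) (by norm_num)]; nlinarith)
      linarith
    have h23 : y ^ ((2:ℝ)/3) = sy^(2:ℕ) := by
      rw [hsydef, ← Real.rpow_natCast (y ^ ((1:ℝ)/3)) 2, ← Real.rpow_mul hy0.le]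
      norm_num
    have h43 : y ^ ((4:ℝ)/3) = sy^(4:ℕ) := by
      rw [hsydef, ← Real.rpow_natCast (y ^ ((1:ℝ)/3)) 4, ← Real.rpow_mul hy0.le]
      norm_num
    rw [h23, h43] at hb
    have hy3 : y = sy^3 := hsy3.symm
    have hbs : |β y - sy| ≤ C₁ * sy^2 := by
      have htr : |β y - sy| ≤ |β y - (sy + α₂ * sy^2 + α₃ * y)| + |α₂ * sy^2 + α₃ * y| := by
        rw [show β y - sy = (β y - (sy + α₂ * sy^2 + α₃ * y)) + (α₂ * sy^2 + α₃ * y) by ring]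
        exact abs_add_le _ _
      have habs : |α₂ * sy^2 + α₃ * y| ≤ |α₂| * sy^2 + |α₃| * sy^3 := by
        rw [hy3]
        refine le_trans (abs_add_le _ _) ?_
        rw [abs_mul, abs_mul, abs_of_nonneg (by positivity : (0:ℝ) ≤ sy^2),
          abs_of_nonneg (by positivity : (0:ℝ) ≤ sy^3)]
      have h4 : sy^4 ≤ sy^2 := pow_le_pow_of_le_one hsy.le hsy1 (by norm_num)
      have h3 : sy^3 ≤ sy^2 := pow_le_pow_of_le_one hsy.le hsy1 (by norm_num)
      have hp1 : C₀ * sy^4 ≤ C₀ * sy^2 := mul_le_mul_of_nonneg_left h4 hC₀.le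
      have hp2 : |α₃| * sy^3 ≤ |α₃| * sy^2 := mul_le_mul_of_nonneg_left h3 (abs_nonneg α₃)
      have hsq : (0:ℝ) ≤ sy^2 := by positivity
      simp only [hC₁def]
      linarith [hb, htr, habs, hp1, hp2, hsq]
    have hC₁sy : C₁ * sy ≤ 1/2 := by
      have : sy ≤ 1/(2*C₁) := le_of_lt (lt_of_lt_of_le hsys₀ hs₀b)
      rw [le_div_iff₀ (by positivity)] at this
      nlinarith
    have habs2 := abs_le.mp hbs
    have hblo : sy/2 ≤ β y := by nlinarith [habs2.1]
    have hbhi : β y ≤ 2*sy := by nlinarith [habs2.2]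
    have hbpos : 0 < β y := by nlinarith
    have hb2s₀ : β y < 2*s₀ := by nlinarith
    have hMb : M * β y ≤ 1/2 := by
      have h1 : β y ≤ 2*s₀ := hb2s₀.le
      have h2 : s₀ ≤ 1/(4*M) := hs₀c
      rw [le_div_iff₀ (by positivity)] at h2
      nlinarith
    exact ⟨he, ⟨hbpos, hb2s₀⟩, hMb, hblo, hbhi, hbs⟩
  -- positivity of η' and strict monotonicity
  have hIcc2s₀ : Icc (0:ℝ) (2*s₀) ⊆ Icc (0:ℝ) r := fun t ht => ⟨ht.1, le_trans ht.2 hr'r⟩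
  have hPpos : ∀ t ∈ Ioo (0:ℝ) (2*s₀), 0 < iteratedDeriv 1 η t := by
    intro t ht
    have hE := abs_le.mp (E1η t (hIcc2s₀ ⟨ht.1.le, ht.2.le⟩))
    have hMt : M * t ≤ 1/2 := by
      have h2 : s₀ ≤ 1/(4*M) := hs₀c
      rw [le_div_iff₀ (by positivity)] at h2
      nlinarith [ht.2]
    have h3' : M * t * t^2 ≤ (1/2) * t^2 := mul_le_mul_of_nonneg_right hMt (sq_nonneg t)
    have ht2 : 0 < t^2 := pow_pos ht.1 2
    linarith [hE.1, h3', ht2]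
  have hmono : StrictMonoOn η (Icc 0 (2*s₀)) := by
    apply strictMonoOn_of_deriv_pos (convex_Icc _ _)
    · exact hη.continuousOn.mono (fun t ht => hIcc0S (hIcc2s₀ ht))
    · intro t ht
      rw [interior_Icc] at ht
      have hd := hηd 0 (by norm_num) t (hIcc0S (hIcc2s₀ ⟨ht.1.le, ht.2.le⟩))
      rw [iteratedDeriv_zero] at hd
      rw [hd.deriv]
      exact hPpos t ht
  -- continuity and differentiability of β
  have hβcont : ∀ y ∈ Ioo (0:ℝ) δ, ContinuousAt β y := fun y hy =>
    myContinuousAt_inverse isOpen_Ioo hmono (fun z hz => (hyfact z hz).1)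
      (fun z hz => (hyfact z hz).2.1) hy
  have hβS : ∀ y ∈ Ioo (0:ℝ) δ, β y ∈ Set.Ioo (-δ₀) δ₀ := by
    intro y hy
    have h := (hyfact y hy).2.1
    constructor
    · linarith [h.1]
    · have := h.2; rw [hr] at hr'r; linarith
  have hηat : ∀ t ∈ Set.Ioo (-δ₀) δ₀, HasDerivAt η (iteratedDeriv 1 η t) t := by
    intro t ht
    have h := hηd 0 (by norm_num) t ht
    rwa [iteratedDeriv_zero] at h
  have hβder : ∀ y ∈ Ioo (0:ℝ) δ, HasDerivAt β (iteratedDeriv 1 η (β y))⁻¹ y := by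
    intro y hy
    refine HasDerivAt.of_local_left_inverse (hβcont y hy) (hηat (β y) (hβS y hy))
      (ne_of_gt (hPpos _ (hyfact y hy).2.1)) ?_
    filter_upwards [isOpen_Ioo.mem_nhds hy] with z hz using (hyfact z hz).1
  -- chain rule formulas
  have hw0at : ∀ y ∈ Ioo (0:ℝ) δ, HasDerivAt w0 (iteratedDeriv 1 w0 (β y)) (β y) := by
    intro y hy
    have h := hw0d 0 (by norm_num) (β y) (hβS y hy)
    rwa [iteratedDeriv_zero] at h
  have hPne : ∀ y ∈ Ioo (0:ℝ) δ, iteratedDeriv 1 η (β y) ≠ 0 := fun y hy =>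
    ne_of_gt (hPpos _ (hyfact y hy).2.1)
  have hF1comp : ∀ y ∈ Ioo (0:ℝ) δ, HasDerivAt (fun z => w0 (β z)) (myF1 w0 η (β y)) y := by
    intro y hy
    have h := (hw0at y hy).comp y (hβder y hy)
    have h2 : myF1 w0 η (β y) = iteratedDeriv 1 w0 (β y) * (iteratedDeriv 1 η (β y))⁻¹ := by
      simp [myF1, div_eq_mul_inv]
    rw [h2]
    exact h
  have hF2comp : ∀ y ∈ Ioo (0:ℝ) δ, HasDerivAt (fun z => myF1 w0 η (β z)) (myF2 w0 η (β y)) y := by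
    intro y hy
    have h := (myF1_hasDeriv (hw0d 1 (by norm_num) _ (hβS y hy)) (hηd 1 (by norm_num) _ (hβS y hy))
      (hPne y hy)).comp y (hβder y hy)
    have h2 : myF2 w0 η (β y) =
        ((iteratedDeriv 2 w0 (β y) * iteratedDeriv 1 η (β y)
          - iteratedDeriv 1 w0 (β y) * iteratedDeriv 2 η (β y)) / (iteratedDeriv 1 η (β y))^2)
          * (iteratedDeriv 1 η (β y))⁻¹ := by
      simp only [myF2]
      rw [show (3:ℕ) = 2+1 from rfl, pow_succ, ← div_div, div_eq_mul_inv]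
    rw [h2]
    exact h
  have hF3comp : ∀ y ∈ Ioo (0:ℝ) δ, HasDerivAt (fun z => myF2 w0 η (β z)) (myF3 w0 η (β y)) y := by
    intro y hy
    have h := (myF2_hasDeriv (hw0d 1 (by norm_num) _ (hβS y hy)) (hw0d 2 (by norm_num) _ (hβS y hy))
      (hηd 1 (by norm_num) _ (hβS y hy)) (hηd 2 (by norm_num) _ (hβS y hy))
      (hPne y hy)).comp y (hβder y hy)
    have h2 : myF3 w0 η (β y) =
        (((iteratedDeriv 3 w0 (β y) * iteratedDeriv 1 η (β y)
            - iteratedDeriv 1 w0 (β y) * iteratedDeriv 3 η (β y)) * iteratedDeriv 1 η (β y)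
          - 3 * (iteratedDeriv 2 w0 (β y) * iteratedDeriv 1 η (β y)
            - iteratedDeriv 1 w0 (β y) * iteratedDeriv 2 η (β y)) * iteratedDeriv 2 η (β y))
          / (iteratedDeriv 1 η (β y))^4) * (iteratedDeriv 1 η (β y))⁻¹ := by
      simp only [myF3]
      rw [show (5:ℕ) = 4+1 from rfl, pow_succ, ← div_div, div_eq_mul_inv]
    rw [h2]
    exact h
  have hit2 : ∀ y ∈ Ioo (0:ℝ) δ, iteratedDeriv 2 (fun z => w0 (β z)) y = myF2 w0 η (β y) := by
    intro y hy
    have heq : deriv (fun z => w0 (β z)) =ᶠ[nhds y] (fun z => myF1 w0 η (β z)) := by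
      filter_upwards [isOpen_Ioo.mem_nhds hy] with z hz using (hF1comp z hz).deriv
    rw [show (2:ℕ) = 1+1 from rfl, iteratedDeriv_succ, iteratedDeriv_one,
      Filter.EventuallyEq.deriv_eq heq]
    exact (hF2comp y hy).deriv
  have hit3 : ∀ y ∈ Ioo (0:ℝ) δ, iteratedDeriv 3 (fun z => w0 (β z)) y = myF3 w0 η (β y) := by
    intro y hy
    have heq2 : iteratedDeriv 2 (fun z => w0 (β z)) =ᶠ[nhds y] (fun z => myF2 w0 η (β z)) := by
      filter_upwards [isOpen_Ioo.mem_nhds hy] with z hz using hit2 z hz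
    rw [show (3:ℕ) = 2+1 from rfl, iteratedDeriv_succ,
      Filter.EventuallyEq.deriv_eq heq2]
    exact (hF3comp y hy).deriv
  -- final estimates
  refine ⟨δ, hδpos, 4000*(M + C₁), by linarith [hMpos, hC₁pos], ?_⟩
  intro x hx
  obtain ⟨he, hbmem, hMbx, hblo, hbhi, hbs⟩ := hyfact x hx
  have hx0 : 0 < x := hx.1
  set s : ℝ := x ^ ((1:ℝ)/3) with hsdef
  have hspos : 0 < s := Real.rpow_pos_of_pos hx0 _
  have hbpos : 0 < (β x) := hbmem.1
  have hbr : β x ∈ Icc (0:ℝ) r := ⟨hbpos.le, by linarith [hbmem.2, hr'r]⟩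
  have hbrr : β x ∈ Icc (-r) r := ⟨by linarith [hbpos], hbr.2⟩
  have hP := E1η (β x) hbr
  have hQ := E2η (β x) hbr
  have hR := E3η (β x) hbr
  have hA := E1w (β x) hbr
  have hB : |iteratedDeriv 2 w0 (β x)| ≤ M := hbw2 _ hbrr
  have hT : |iteratedDeriv 3 w0 (β x)| ≤ M := hbw3 _ hbrr
  obtain ⟨hb1, hPlo, hPhi, hQabs, hRabs, hAabs⟩ := myBnds hbpos hM1 hMbx hP hQ hR hA
  have h53 : x ^ (-(5:ℝ)/3) = (s^5)⁻¹ := by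
    rw [show (-(5:ℝ)/3) = -((5:ℝ)/3) by norm_num, Real.rpow_neg hx0.le, hsdef,
      ← Real.rpow_natCast (x ^ ((1:ℝ)/3)) 5, ← Real.rpow_mul hx0.le]
    norm_num
  have h43 : x ^ (-(4:ℝ)/3) = (s^4)⁻¹ := by
    rw [show (-(4:ℝ)/3) = -((4:ℝ)/3) by norm_num, Real.rpow_neg hx0.le, hsdef,
      ← Real.rpow_natCast (x ^ ((1:ℝ)/3)) 4, ← Real.rpow_mul hx0.le]
    norm_num
  have h83 : x ^ (-(8:ℝ)/3) = (s^8)⁻¹ := by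
    rw [show (-(8:ℝ)/3) = -((8:ℝ)/3) by norm_num, Real.rpow_neg hx0.le, hsdef,
      ← Real.rpow_natCast (x ^ ((1:ℝ)/3)) 8, ← Real.rpow_mul hx0.le]
    norm_num
  constructor
  · rw [hit2 x hx, h53, h43]
    simp only [myF2]
    exact myFinal1 hbpos hspos hM1 hC₁1 hblo hbhi hbs
      (myKey1 hbpos hB hP hQ hA hMbx hM1) hPlo
  · rw [hit3 x hx, h83]
    simp only [myF3]
    exact myFinal2 hbpos hspos hM1 hC₁1 hblo
      (myKey2 hbpos hAabs hB hT hPlo hPhi hQabs hRabs hM1 hb1) hPlo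
end

section
/- Fix constants M > 1 large and ε > 0 small with M⁴ε ≪ 1. Let ζ ∈ ℝ with |ζ| ≤ M⁴τ for small τ ≥ 0, and consider the equation ζ = y³ - y + 𝓛(y,τ) where 𝓛 is C¹ in (y,τ) on |y| ≤ 10, 0 ≤ τ ≤ ε, satisfying |𝓛(y,τ) - c y²τ| ≤ 2M³τ², |∂_y 𝓛(y,τ) - 2cyτ| ≤ 6M³τ², |∂_τ 𝓛(y,τ) - cy²| ≤ 8M³τ for a constant c. Then for each small ζ and τ there exist exactly one solution y₊(ζ,τ) near +1 and one solution y₋(ζ,τ) near -1, and y₊(ζ,τ) = ±1 + ζ/2 - (c/2)τ + O(τ²). -/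
open Set


set_option maxHeartbeats 2000000 in
lemma aux_core (M ε c : ℝ) (L : ℝ → ℝ → ℝ) (hM : 1 < M) (hε : 0 < ε)
    (hL : ContDiffOn ℝ 1 (fun p : ℝ × ℝ => L p.1 p.2)
      (Set.Icc (-10 : ℝ) 10 ×ˢ Set.Icc 0 ε))
    (hL1 : ∀ y τ : ℝ, |y| ≤ 10 → τ ∈ Set.Icc (0:ℝ) ε →
      |L y τ - c * y ^ 2 * τ| ≤ 2 * M ^ 3 * τ ^ 2)
    (hL2 : ∀ y τ : ℝ, |y| ≤ 10 → τ ∈ Set.Icc (0:ℝ) ε →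
      |deriv (fun y' => L y' τ) y - 2 * c * y * τ| ≤ 6 * M ^ 3 * τ ^ 2)
    (B : ℝ) (hBdef : B = |c| + M ^ 4 + M ^ 3 + 1)
    (s τ ζ : ℝ) (hs : s = 1 ∨ s = -1)
    (hτ0 : 0 < τ) (hτε : τ < ε)
    (hτB : B * τ ≤ 1 / 1000)
    (hζ : |ζ| ≤ M ^ 4 * τ) :
    ∃ a : ℝ, a ^ 3 - a + L a τ = ζ ∧
      |a - (s + ζ / 2 - c / 2 * τ)| ≤ 10 * B ^ 2 * τ ^ 2 ∧
      ∀ y : ℝ, |y - s| ≤ 1 / 10 → y ^ 3 - y + L y τ = ζ → y = a := by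
  have hM0 : (0:ℝ) < M := lt_trans one_pos hM
  have hMB4 : M ^ 4 ≤ B := by
    have := abs_nonneg c; have := pow_pos hM0 3; simp only [hBdef]; linarith
  have hMB3 : M ^ 3 ≤ B := by
    have := abs_nonneg c; have := pow_pos hM0 4; simp only [hBdef]; linarith
  have hcB : |c| ≤ B := by
    have := pow_pos hM0 3; have := pow_pos hM0 4; simp only [hBdef]; linarith
  have hB1 : (1:ℝ) ≤ B := by
    have := abs_nonneg c; have := pow_pos hM0 3; have := pow_pos hM0 4
    simp only [hBdef]; linarith
  have hτ1000 : τ ≤ 1 / 1000 := by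
    have h := mul_le_mul_of_nonneg_right hB1 hτ0.le
    rw [one_mul] at h; linarith
  have hcτ : |c| * τ ≤ 1 / 1000 :=
    (mul_le_mul_of_nonneg_right hcB hτ0.le).trans hτB
  have hM3τ : M ^ 3 * τ ≤ 1 / 1000 :=
    (mul_le_mul_of_nonneg_right hMB3 hτ0.le).trans hτB
  have hM4τ : M ^ 4 * τ ≤ 1 / 1000 :=
    (mul_le_mul_of_nonneg_right hMB4 hτ0.le).trans hτB
  have hζ1 : |ζ| ≤ 1 / 1000 := hζ.trans hM4τ
  have hζ2 := abs_le.mp hζ1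
  have hc2 := abs_le.mp (le_refl |c|) |>.1
  have hcabs := abs_le.mp (le_refl |c|)
  have hcc : -|c| ≤ c ∧ c ≤ |c| := ⟨neg_abs_le c, le_abs_self c⟩
  have hτmem : τ ∈ Icc (0:ℝ) ε := ⟨hτ0.le, hτε.le⟩
  have hs3 : s ^ 2 = 1 := by rcases hs with rfl | rfl <;> norm_num
  have hs4 : s ^ 3 = s := by rcases hs with rfl | rfl <;> norm_num
  have hsb : -1 ≤ s ∧ s ≤ 1 := by rcases hs with rfl | rfl <;> norm_num
  -- membership facts
  have hmem : ∀ y : ℝ, |y - s| ≤ 1 / 10 → |y| ≤ 2 ∧ |y| ≤ 10 ∧ (81/100 : ℝ) ≤ y ^ 2 := by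
    intro y hy
    have h := abs_le.mp hy
    rcases hs with rfl | rfl <;>
      refine ⟨abs_le.mpr ⟨by linarith, by linarith⟩,
        abs_le.mpr ⟨by linarith, by linarith⟩, by nlinarith⟩
  -- differentiability in y
  have hg : ∀ y : ℝ, |y| ≤ 2 → DifferentiableAt ℝ (fun y' => L y' τ) y := by
    intro y hy
    have h := abs_le.mp hy
    have hmemn : (Icc (-10:ℝ) 10 ×ˢ Icc 0 ε) ∈ nhds ((y, τ) : ℝ × ℝ) := by
      refine mem_nhds_iff.mpr ⟨Ioo (-10:ℝ) 10 ×ˢ Ioo 0 ε, ?_, ?_, ?_⟩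
      · exact Set.prod_mono Ioo_subset_Icc_self Ioo_subset_Icc_self
      · exact isOpen_Ioo.prod isOpen_Ioo
      · exact ⟨⟨by linarith, by linarith⟩, ⟨hτ0, hτε⟩⟩
    have h1 : ContDiffAt ℝ 1 (fun p : ℝ × ℝ => L p.1 p.2) (y, τ) := hL.contDiffAt hmemn
    have h2 : DifferentiableAt ℝ (fun p : ℝ × ℝ => L p.1 p.2) (y, τ) :=
      h1.differentiableAt one_ne_zero
    have h3 : DifferentiableAt ℝ (fun y' : ℝ => ((y', τ) : ℝ × ℝ)) y :=
      differentiableAt_id.prodMk (differentiableAt_const τ)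
    exact h2.comp y h3
  have hf : ∀ y : ℝ, |y| ≤ 2 →
      HasDerivAt (fun y' => y' ^ 3 - y' + L y' τ)
        (3 * y ^ 2 - 1 + deriv (fun y' => L y' τ) y) y := by
    intro y hy
    have h1 : HasDerivAt (fun y' : ℝ => y' ^ 3 - y') (3 * y ^ 2 - 1) y := by
      have := (hasDerivAt_pow 3 y).sub (hasDerivAt_id y)
      exact this.congr_deriv (by push_cast; ring)
    exact h1.add (hg y hy).hasDerivAt
  have hsabs : |s| = 1 := by rcases hs with rfl | rfl <;> norm_num
  have hζB : |ζ| ≤ B * τ := hζ.trans (mul_le_mul_of_nonneg_right hMB4 hτ0.le)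
  have hL1' : ∀ y : ℝ, |y| ≤ 10 → |L y τ - c * y ^ 2 * τ| ≤ 2 * M ^ 3 * τ ^ 2 :=
    fun y hy => hL1 y τ hy hτmem
  have hL2' : ∀ y : ℝ, |y| ≤ 10 → |deriv (fun y' => L y' τ) y - 2 * c * y * τ| ≤ 6 * M ^ 3 * τ ^ 2 :=
    fun y hy => hL2 y τ hy hτmem
  have hτB' : B * τ ≤ 1 / 1000 := hτB

  have hM3τ2 : M ^ 3 * τ ^ 2 ≤ 1 / 1000000 := by
    have h := mul_le_mul hM3τ hτ1000 hτ0.le (by norm_num : (0:ℝ) ≤ 1/1000)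
    calc M ^ 3 * τ ^ 2 = M ^ 3 * τ * τ := by ring
      _ ≤ 1/1000 * (1/1000) := h
      _ = 1/1000000 := by norm_num
  set F : ℝ → ℝ := fun y' => y' ^ 3 - y' + L y' τ with hF
  have hIccmem : ∀ y : ℝ, y ∈ Icc (s - 1/10) (s + 1/10) ↔ |y - s| ≤ 1/10 := by
    intro y; rw [abs_le]; constructor <;> (rintro ⟨h1, h2⟩; constructor <;> linarith)
  -- derivative lower bound
  have hd : ∀ y : ℝ, |y - s| ≤ 1/10 → 1 ≤ 3 * y ^ 2 - 1 + deriv (fun y' => L y' τ) y := by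
    intro y hy
    obtain ⟨hy2, hy10, hysq⟩ := hmem y hy
    have h2 := abs_le.mp (hL2' y hy10)
    have hyabs := abs_le.mp hy2
    have hcy : |2 * c * y * τ| ≤ 2 * (|c| * τ) * 2 := by
      rw [show 2 * c * y * τ = 2 * (c * τ) * y by ring, abs_mul, abs_mul, abs_mul,
        abs_two, abs_of_pos hτ0]
      nlinarith [abs_nonneg c, mul_nonneg (abs_nonneg c) hτ0.le]
    have hcy' := abs_le.mp hcy
    linarith [hcy'.1, hcy'.2, h2.1, h2.2, hM3τ2]
  have hcont : ContinuousOn F (Icc (s - 1/10) (s + 1/10)) := by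
    intro y hy
    exact ((hf y ((hmem y ((hIccmem y).mp hy)).1)).differentiableAt.continuousAt).continuousWithinAt
  have hderiv_eq : ∀ y : ℝ, |y| ≤ 2 →
      deriv F y = 3 * y ^ 2 - 1 + deriv (fun y' => L y' τ) y := fun y hy => (hf y hy).deriv
  have hmono : StrictMonoOn F (Icc (s - 1/10) (s + 1/10)) := by
    apply strictMonoOn_of_deriv_pos (convex_Icc _ _) hcont
    intro y hy
    rw [interior_Icc] at hy
    have hy' : |y - s| ≤ 1/10 := (hIccmem y).mp (Ioo_subset_Icc_self hy)
    rw [hderiv_eq y (hmem y hy').1]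
    linarith [hd y hy']
  -- L bound on the interval
  have hLb : ∀ y : ℝ, |y - s| ≤ 1/10 → |L y τ| ≤ 5/1000 := by
    intro y hy
    obtain ⟨hy2, hy10, _⟩ := hmem y hy
    have h1 := abs_le.mp (hL1' y hy10)
    have hyabs := abs_le.mp hy2
    have hysq : y ^ 2 ≤ 4 := by nlinarith
    have hcy2 : |c * y ^ 2 * τ| ≤ |c| * τ * 4 := by
      rw [show c * y ^ 2 * τ = (c * τ) * y ^ 2 by ring, abs_mul]
      have h3 : |c * τ| = |c| * τ := by rw [abs_mul, abs_of_pos hτ0]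
      rw [h3, abs_of_nonneg (sq_nonneg y)]
      exact mul_le_mul_of_nonneg_left hysq (mul_nonneg (abs_nonneg c) hτ0.le)
    have hcy2' := abs_le.mp hcy2
    rw [abs_le]
    exact ⟨by linarith [h1.1, hcy2'.1], by linarith [h1.2, hcy2'.2]⟩
  -- endpoints
  have hend : F (s - 1/10) ≤ ζ ∧ ζ ≤ F (s + 1/10) := by
    have hζ2 := abs_le.mp hζ1
    have ha := abs_le.mp (hLb (s - 1/10) (by rw [show s - 1/10 - s = -(1/10) by ring, abs_neg,
        abs_of_nonneg (by norm_num : (0:ℝ) ≤ 1/10)]))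
    have hb := abs_le.mp (hLb (s + 1/10) (by rw [show s + 1/10 - s = 1/10 by ring,
        abs_of_nonneg (by norm_num : (0:ℝ) ≤ 1/10)]))
    have e1 : (s - 1/10) ^ 3 - (s - 1/10) = 3*s/100 - 201/1000 := by
      linear_combination hs4 - (3/10 : ℝ) * hs3
    have e2 : (s + 1/10) ^ 3 - (s + 1/10) = 3*s/100 + 201/1000 := by
      linear_combination hs4 + (3/10 : ℝ) * hs3
    constructor
    · show (s - 1/10) ^ 3 - (s - 1/10) + L (s - 1/10) τ ≤ ζ
      rw [e1]; linarith [hsb.1, hsb.2, ha.1, ha.2, hζ2.1, hζ2.2]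
    · show ζ ≤ (s + 1/10) ^ 3 - (s + 1/10) + L (s + 1/10) τ
      rw [e2]; linarith [hsb.1, hsb.2, hb.1, hb.2, hζ2.1, hζ2.2]
  obtain ⟨a, haI, haeq⟩ := intermediate_value_Icc (by linarith : s - 1/10 ≤ s + 1/10) hcont
    ⟨hend.1, hend.2⟩
  have haI' : |a - s| ≤ 1/10 := (hIccmem a).mp haI
  refine ⟨a, haeq, ?_, ?_⟩
  · -- expansion bound
    set δ : ℝ := ζ / 2 - c / 2 * τ with hδdef
    have hζδ : ζ = 2 * δ + c * τ := by rw [hδdef]; ring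
    have h1 := abs_le.mp hζB
    have h2 : |c * τ| = |c| * τ := by rw [abs_mul, abs_of_pos hτ0]
    have h3 : -(|c| * τ) ≤ c * τ ∧ c * τ ≤ |c| * τ := by
      rw [← h2]; exact ⟨neg_abs_le _, le_abs_self _⟩
    have h4 : |c| * τ ≤ B * τ := mul_le_mul_of_nonneg_right hcB hτ0.le
    have hδb : -(B * τ) ≤ δ ∧ δ ≤ B * τ := by
      rw [hδdef]; constructor <;> linarith
    have hδ1 : -(1/1000 : ℝ) ≤ δ ∧ δ ≤ 1/1000 := ⟨by linarith [hδb.1], by linarith [hδb.2]⟩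
    have hδsq : δ ^ 2 ≤ B ^ 2 * τ ^ 2 := by
      have h := sq_le_sq' hδb.1 hδb.2
      calc δ ^ 2 ≤ (B * τ) ^ 2 := h
        _ = B ^ 2 * τ ^ 2 := by ring
    have hystar : |s + δ - s| ≤ 1/10 := by
      rw [show s + δ - s = δ by ring, abs_le]; exact ⟨by linarith [hδ1.1], by linarith [hδ1.2]⟩
    have hystar10 : |s + δ| ≤ 10 := (hmem _ hystar).2.1
    have hystarI : s + δ ∈ Icc (s - 1/10) (s + 1/10) := (hIccmem _).mpr hystar
    -- algebraic identity
    have hid : (s + δ) ^ 3 - (s + δ) + c * (s + δ) ^ 2 * τ - ζ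
        = 3 * s * δ ^ 2 + δ ^ 3 + 2 * c * s * δ * τ + c * δ ^ 2 * τ := by
      rw [hζδ]; linear_combination hs4 + (3 * δ + c * τ) * hs3
    -- bound on F (s+δ) - ζ
    have hLstar := abs_le.mp (hL1' (s + δ) hystar10)
    have hP : |(s + δ) ^ 3 - (s + δ) + L (s + δ) τ - ζ| ≤ 10 * B ^ 2 * τ ^ 2 := by
      have hBτpos : 0 ≤ B * τ := by positivity
      have hB0 : (0:ℝ) ≤ B := by linarith
      have t1 : |3 * s * δ ^ 2| ≤ 3 * (B ^ 2 * τ ^ 2) := by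
        rw [abs_mul, abs_mul, abs_of_nonneg (sq_nonneg δ), hsabs,
          (by norm_num : |(3:ℝ)| = 3), mul_one]
        linarith [hδsq]
      have t2 : |δ ^ 3| ≤ B ^ 2 * τ ^ 2 := by
        rw [show δ ^ 3 = δ ^ 2 * δ by ring, abs_mul, abs_of_nonneg (sq_nonneg δ)]
        have hδa : |δ| ≤ 1/1000 := abs_le.mpr hδ1
        calc δ ^ 2 * |δ| ≤ δ ^ 2 * 1 :=
              mul_le_mul_of_nonneg_left (hδa.trans (by norm_num)) (sq_nonneg δ)
          _ = δ ^ 2 := mul_one _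
          _ ≤ B ^ 2 * τ ^ 2 := hδsq
      have t3 : |2 * c * s * δ * τ| ≤ 2 * (B ^ 2 * τ ^ 2) := by
        have he : |2 * c * s * δ * τ| = 2 * ((|c| * |δ|) * τ) := by
          rw [show 2 * c * s * δ * τ = 2 * (c * (s * (δ * τ))) by ring]
          rw [abs_mul, abs_mul, abs_mul, abs_mul, abs_two, hsabs, abs_of_pos hτ0]; ring
        rw [he]
        have hδa : |δ| ≤ B * τ := abs_le.mpr hδb
        have hcd : |c| * |δ| ≤ B * (B * τ) :=
          mul_le_mul hcB hδa (abs_nonneg δ) hB0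
        have := mul_le_mul_of_nonneg_right hcd hτ0.le
        calc 2 * ((|c| * |δ|) * τ) ≤ 2 * (B * (B * τ) * τ) := by linarith
          _ = 2 * (B ^ 2 * τ ^ 2) := by ring
      have t4 : |c * δ ^ 2 * τ| ≤ B ^ 2 * τ ^ 2 := by
        rw [show c * δ ^ 2 * τ = c * τ * δ ^ 2 by ring, abs_mul, h2,
          abs_of_nonneg (sq_nonneg δ)]
        calc |c| * τ * δ ^ 2 ≤ 1 * δ ^ 2 :=
              mul_le_mul_of_nonneg_right (hcτ.trans (by norm_num)) (sq_nonneg δ)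
          _ = δ ^ 2 := one_mul _
          _ ≤ B ^ 2 * τ ^ 2 := hδsq
      have t5 : |L (s + δ) τ - c * (s + δ) ^ 2 * τ| ≤ 2 * (B ^ 2 * τ ^ 2) := by
        refine (hL1' (s + δ) hystar10).trans ?_
        have hBB : M ^ 3 ≤ B ^ 2 := by
          have h := mul_le_mul_of_nonneg_right hB1 (by linarith : (0:ℝ) ≤ B)
          rw [one_mul] at h
          calc M ^ 3 ≤ B := hMB3
            _ ≤ B * B := h
            _ = B ^ 2 := by ring
        have h2' := mul_le_mul_of_nonneg_right hBB (sq_nonneg τ)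
        linarith
      have hsplit : (s + δ) ^ 3 - (s + δ) + L (s + δ) τ - ζ
          = (3 * s * δ ^ 2 + δ ^ 3 + 2 * c * s * δ * τ + c * δ ^ 2 * τ)
            + (L (s + δ) τ - c * (s + δ) ^ 2 * τ) := by
        rw [← hid]; ring
      rw [hsplit]
      calc |3 * s * δ ^ 2 + δ ^ 3 + 2 * c * s * δ * τ + c * δ ^ 2 * τ
            + (L (s + δ) τ - c * (s + δ) ^ 2 * τ)|
          ≤ |3 * s * δ ^ 2| + |δ ^ 3| + |2 * c * s * δ * τ| + |c * δ ^ 2 * τ|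
            + |L (s + δ) τ - c * (s + δ) ^ 2 * τ| := by
            calc _ ≤ |3 * s * δ ^ 2 + δ ^ 3 + 2 * c * s * δ * τ + c * δ ^ 2 * τ|
                  + |L (s + δ) τ - c * (s + δ) ^ 2 * τ| := abs_add_le _ _
              _ ≤ _ := by
                have := abs_add_le (3 * s * δ ^ 2 + δ ^ 3 + 2 * c * s * δ * τ) (c * δ ^ 2 * τ)
                have := abs_add_le (3 * s * δ ^ 2 + δ ^ 3) (2 * c * s * δ * τ)
                have := abs_add_le (3 * s * δ ^ 2) (δ ^ 3)
                linarith
        _ ≤ 10 * B ^ 2 * τ ^ 2 := by linarith [mul_nonneg (sq_nonneg B) (sq_nonneg τ)]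
    -- mean value argument
    have hdiffint : DifferentiableOn ℝ F (interior (Icc (s - 1/10) (s + 1/10))) := by
      intro y hy
      rw [interior_Icc] at hy
      exact ((hf y (hmem y ((hIccmem y).mp (Ioo_subset_Icc_self hy))).1).differentiableAt).differentiableWithinAt
    have hdbound : ∀ x ∈ interior (Icc (s - 1/10) (s + 1/10)), (1:ℝ) ≤ deriv F x := by
      intro x hx
      rw [interior_Icc] at hx
      have hx' : |x - s| ≤ 1/10 := (hIccmem x).mp (Ioo_subset_Icc_self hx)
      rw [hderiv_eq x (hmem x hx').1]
      exact hd x hx'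
    have hmvt := (convex_Icc (s - 1/10) (s + 1/10)).mul_sub_le_image_sub_of_le_deriv
      hcont hdiffint hdbound
    have hFstar : F (s + δ) = (s + δ) ^ 3 - (s + δ) + L (s + δ) τ := rfl
    have hgoal : |a - (s + δ)| ≤ 10 * B ^ 2 * τ ^ 2 := by
      have hPa := abs_le.mp hP
      rcases le_total a (s + δ) with hle | hle
      · have := hmvt a haI (s + δ) hystarI hle
        rw [one_mul, haeq, hFstar] at this
        rw [abs_le]
        constructor <;> linarith [hPa.1, hPa.2]
      · have := hmvt (s + δ) hystarI a haI hle
        rw [one_mul, haeq, hFstar] at this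
        rw [abs_le]
        constructor <;> linarith [hPa.1, hPa.2]
    have : s + ζ / 2 - c / 2 * τ = s + δ := by rw [hδdef]; ring
    rw [this]
    exact hgoal
  · intro y hy hfy
    exact hmono.injOn ((hIccmem y).mpr hy) haI (hfy.trans haeq.symm)

set_option maxHeartbeats 1000000 in
/-- Implicit-function-theorem step: for `|ζ| ≤ M⁴τ` and small `τ`, the perturbed
cubic equation `ζ = y³ - y + 𝓛(y,τ)` has exactly one solution `y₊` near `+1` and
one solution `y₋` near `-1`, with `y± = ±1 + ζ/2 - (c/2)τ + O(τ²)`. -/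
theorem stmt6 (M ε c : ℝ) (L : ℝ → ℝ → ℝ) (hM : 1 < M) (hε : 0 < ε)
    (hsmall : M ^ 4 * ε < 1 / 100)
    (hL : ContDiffOn ℝ 1 (fun p : ℝ × ℝ => L p.1 p.2)
      (Set.Icc (-10 : ℝ) 10 ×ˢ Set.Icc 0 ε))
    (hL1 : ∀ y τ : ℝ, |y| ≤ 10 → τ ∈ Set.Icc (0:ℝ) ε →
      |L y τ - c * y ^ 2 * τ| ≤ 2 * M ^ 3 * τ ^ 2)
    (hL2 : ∀ y τ : ℝ, |y| ≤ 10 → τ ∈ Set.Icc (0:ℝ) ε →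
      |deriv (fun y' => L y' τ) y - 2 * c * y * τ| ≤ 6 * M ^ 3 * τ ^ 2)
    (hL3 : ∀ y τ : ℝ, |y| ≤ 10 → τ ∈ Set.Icc (0:ℝ) ε →
      |deriv (fun τ' => L y τ') τ - c * y ^ 2| ≤ 8 * M ^ 3 * τ) :
    ∃ τ₀ > 0, ∃ C > 0, ∃ yp ym : ℝ → ℝ → ℝ,
      ∀ τ ∈ Set.Icc (0:ℝ) τ₀, ∀ ζ : ℝ, |ζ| ≤ M ^ 4 * τ →
        ((yp ζ τ) ^ 3 - yp ζ τ + L (yp ζ τ) τ = ζ ∧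
          |yp ζ τ - (1 + ζ / 2 - (c / 2) * τ)| ≤ C * τ ^ 2 ∧
          (∀ y : ℝ, |y - 1| ≤ 1 / 10 → y ^ 3 - y + L y τ = ζ → y = yp ζ τ)) ∧
        ((ym ζ τ) ^ 3 - ym ζ τ + L (ym ζ τ) τ = ζ ∧
          |ym ζ τ - (-1 + ζ / 2 - (c / 2) * τ)| ≤ C * τ ^ 2 ∧
          (∀ y : ℝ, |y + 1| ≤ 1 / 10 → y ^ 3 - y + L y τ = ζ → y = ym ζ τ)) := by
  have hM0 : (0:ℝ) < M := lt_trans one_pos hM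
  set B : ℝ := |c| + M ^ 4 + M ^ 3 + 1 with hBdef
  have hBpos : 0 < B := by
    have := abs_nonneg c; have := pow_pos hM0 3; have := pow_pos hM0 4
    simp only [hBdef]; linarith
  set τ₀ : ℝ := min (ε / 2) (1 / (1000 * B)) with hτ₀def
  have hτ₀pos : 0 < τ₀ := lt_min (by linarith) (by positivity)
  have hCpos : 0 < 10 * B ^ 2 := by positivity
  refine ⟨τ₀, hτ₀pos, 10 * B ^ 2, hCpos, ?_⟩
  have key : ∀ ζ τ : ℝ, ∃ a b : ℝ, τ ∈ Set.Icc (0:ℝ) τ₀ → |ζ| ≤ M ^ 4 * τ →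
      ((a ^ 3 - a + L a τ = ζ ∧
        |a - (1 + ζ / 2 - (c / 2) * τ)| ≤ 10 * B ^ 2 * τ ^ 2 ∧
        (∀ y : ℝ, |y - 1| ≤ 1 / 10 → y ^ 3 - y + L y τ = ζ → y = a)) ∧
       (b ^ 3 - b + L b τ = ζ ∧
        |b - (-1 + ζ / 2 - (c / 2) * τ)| ≤ 10 * B ^ 2 * τ ^ 2 ∧
        (∀ y : ℝ, |y + 1| ≤ 1 / 10 → y ^ 3 - y + L y τ = ζ → y = b))) := by
    intro ζ τ
    by_cases h : τ ∈ Set.Icc (0:ℝ) τ₀ ∧ |ζ| ≤ M ^ 4 * τ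
    · obtain ⟨⟨hτ0', hττ₀⟩, hζ⟩ := h
      rcases eq_or_lt_of_le hτ0' with heq | hpos
      · -- τ = 0
        refine ⟨1, -1, fun _ _ => ?_⟩
        have hτz : τ = 0 := heq.symm
        subst hτz
        have hζ0 : ζ = 0 := by
          have h1 : |ζ| ≤ 0 := by simpa using hζ
          exact abs_eq_zero.mp (le_antisymm h1 (abs_nonneg ζ))
        have hL0 : ∀ y : ℝ, |y| ≤ 10 → L y 0 = 0 := by
          intro y hy
          have := hL1 y 0 hy ⟨le_refl 0, hε.le⟩
          have h2 : |L y 0| ≤ 0 := by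
            simpa using this
          exact abs_eq_zero.mp (le_antisymm h2 (abs_nonneg _))
        subst hζ0
        constructor
        · refine ⟨?_, ?_, ?_⟩
          · rw [hL0 1 (by norm_num)]; norm_num
          · simp
          · intro y hy heq2
            have hyb := abs_le.mp hy
            have hy10 : |y| ≤ 10 := abs_le.mpr ⟨by linarith [hyb.1], by linarith [hyb.2]⟩
            rw [hL0 y hy10] at heq2
            have hfac : (y - 1) * (y * (y + 1)) = 0 := by linear_combination heq2
            rcases mul_eq_zero.mp hfac with h1 | h1
            · linarith [hyb.1, hyb.2, sub_eq_zero.mp h1]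
            · exfalso; nlinarith [hyb.1, hyb.2]
        · refine ⟨?_, ?_, ?_⟩
          · rw [hL0 (-1) (by norm_num)]; norm_num
          · simp
          · intro y hy heq2
            have hyb := abs_le.mp hy
            have hy10 : |y| ≤ 10 := abs_le.mpr ⟨by linarith [hyb.1], by linarith [hyb.2]⟩
            rw [hL0 y hy10] at heq2
            have hfac : (y + 1) * (y * (y - 1)) = 0 := by linear_combination heq2
            rcases mul_eq_zero.mp hfac with h1 | h1
            · linarith [hyb.1, hyb.2, eq_neg_of_add_eq_zero_left h1]
            · exfalso; nlinarith [hyb.1, hyb.2]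
      · -- τ > 0
        have hτε' : τ < ε := by
          have := hττ₀.trans (min_le_left (ε / 2) (1 / (1000 * B)))
          linarith
        have hτB : B * τ ≤ 1 / 1000 := by
          have h1 := hττ₀.trans (min_le_right (ε / 2) (1 / (1000 * B)))
          have h2 : B * τ ≤ B * (1 / (1000 * B)) :=
            mul_le_mul_of_nonneg_left h1 hBpos.le
          have h3 : B * (1 / (1000 * B)) = 1 / 1000 := by
            field_simp
          linarith
        obtain ⟨a, ha1, ha2, ha3⟩ :=
          aux_core M ε c L hM hε hL hL1 hL2 B hBdef 1 τ ζ (Or.inl rfl) hpos hτε' hτB hζ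
        obtain ⟨b, hb1, hb2, hb3⟩ :=
          aux_core M ε c L hM hε hL hL1 hL2 B hBdef (-1) τ ζ (Or.inr rfl) hpos hτε' hτB hζ
        refine ⟨a, b, fun _ _ => ⟨⟨ha1, ?_, ha3⟩, hb1, ?_, fun y hy => hb3 y ?_⟩⟩
        · convert ha2 using 3 <;> ring
        · convert hb2 using 3 <;> ring
        · rwa [show y - (-1) = y + 1 by ring]
    · exact ⟨0, 0, fun h1 h2 => absurd ⟨h1, h2⟩ h⟩
  choose yp ym hkey using key
  exact ⟨yp, ym, fun τ hτ ζ hζ => hkey ζ τ hτ hζ⟩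
end

section
/- Suppose w'(β) satisfies |w'(β) + (1/3)β^{-2/3}| ≤ (2/3)|a₂| |β|^{-1/3} + M for |β| small, p ∈ [9/10, 11/10], and |β| ≥ (4/5)t^{3/2} + (5/8)|x - φ(t)|. Then |w'(β) / (1 + t p w'(β))| ≤ (4/3)(t³ + (x - φ(t))²)^{-1/3} for small t and |x - φ(t)|. -/
open Set

private lemma cube_le_aux {x c : ℝ} (hx : 0 ≤ x) (hc : 0 ≤ c) (h : x ^ (3:ℕ) ≤ c ^ (3:ℕ)) :
    x ≤ c :=
  le_of_pow_le_pow_left₀ (by norm_num) hc h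

set_option maxHeartbeats 1200000 in
/-- The spatial derivative estimate for the continued simple wave: if
`w'` is close to `-(1/3)|β|^{-2/3}` and `|β| ≥ (4/5)t^{3/2} + (5/8)|x - φ(t)|`,
then `|w'/(1 + t p w')| ≤ (4/3)(t³ + (x - φ(t))²)^{-1/3}` for small `t` and
`|x - φ(t)|`. -/
theorem stmt11 (M a₂ : ℝ) (hM : 1 < M) (ha₂ : |a₂| ≤ M) :
    ∃ δ > 0, ∀ t β p w' z : ℝ, 0 < t → t < δ → |z| < δ → 0 < |β| → |β| < δ →
      p ∈ Set.Icc (9/10 : ℝ) (11/10) →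
      |w' + (1/3) * |β| ^ (-(2:ℝ)/3)| ≤ (2/3) * |a₂| * |β| ^ (-(1:ℝ)/3) + M →
      (4/5) * t ^ ((3:ℝ)/2) + (5/8) * |z| ≤ |β| →
      |w' / (1 + t * p * w')| ≤ (4/3) * (t ^ 3 + z ^ 2) ^ (-(1:ℝ)/3) := by
  have hM0 : (0:ℝ) < M := by linarith
  refine ⟨((20*M)⁻¹)^3, by positivity, ?_⟩
  intro t β p w' z ht htδ hzδ hb0 hbδ hp herr hlow
  obtain ⟨hp1, hp2⟩ := hp
  set b := |β| with hbdef
  have hb : (0:ℝ) < b := hb0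
  set A := b ^ ((2:ℝ)/3) with hAdef
  have hA : (0:ℝ) < A := Real.rpow_pos_of_pos hb _
  have hIpos : (0:ℝ) < A⁻¹ := by positivity
  -- b^{1/3} ≤ 1/(20M)
  have h13 : b ^ ((1:ℝ)/3) ≤ (20*M)⁻¹ := by
    have h1 : b ^ ((1:ℝ)/3) ≤ (((20*M)⁻¹)^3) ^ ((1:ℝ)/3) :=
      Real.rpow_le_rpow hb.le hbδ.le (by norm_num)
    have h2 : ((((20*M):ℝ)⁻¹)^3) ^ ((1:ℝ)/3) = (20*M)⁻¹ := by
      rw [← Real.rpow_natCast ((20*M):ℝ)⁻¹ 3, ← Real.rpow_mul (by positivity)]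
      norm_num
    rw [h2] at h1; exact h1
  -- A = b^{2/3} ≤ (1/(20M))²
  have h23 : A ≤ ((20*M)⁻¹)^2 := by
    have e : A = (b ^ ((1:ℝ)/3))^(2:ℕ) := by
      rw [← Real.rpow_natCast (b ^ ((1:ℝ)/3)) 2, ← Real.rpow_mul hb.le]
      norm_num [hAdef]
    rw [e]
    exact pow_le_pow_left₀ (Real.rpow_nonneg hb.le _) h13 2
  -- rewrite negative powers
  have hnegA : b ^ (-(2:ℝ)/3) = A⁻¹ := by
    rw [show (-(2:ℝ)/3) = -((2:ℝ)/3) by norm_num, Real.rpow_neg hb.le]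
  have hsplit : b ^ (-(1:ℝ)/3) = b ^ ((1:ℝ)/3) * A⁻¹ := by
    rw [show (-(1:ℝ)/3) = (1:ℝ)/3 + -((2:ℝ)/3) by norm_num, Real.rpow_add hb,
      Real.rpow_neg hb.le]
  rw [hnegA, hsplit] at herr
  -- the error bound: RHS ≤ (1/20) A⁻¹
  have herr2 : (2/3) * |a₂| * (b ^ ((1:ℝ)/3) * A⁻¹) + M ≤ (1/20) * A⁻¹ := by
    have e1 : |a₂| * b ^ ((1:ℝ)/3) ≤ M * (20*M)⁻¹ :=
      mul_le_mul ha₂ h13 (Real.rpow_nonneg hb.le _) hM0.le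
    have e1' : M * (20*M)⁻¹ = 1/20 := by field_simp
    have e2 : M * A ≤ M * ((20*M)⁻¹)^2 := mul_le_mul_of_nonneg_left h23 hM0.le
    have e2' : M * ((20*M)⁻¹)^2 ≤ 1/400 := by
      have e : M * ((20*M)⁻¹)^2 = (400*M)⁻¹ := by field_simp; ring
      rw [e, show (1/400:ℝ) = (400:ℝ)⁻¹ by norm_num]
      exact inv_anti₀ (by norm_num) (by linarith)
    have h1 : |a₂| * b ^ ((1:ℝ)/3) * A⁻¹ ≤ (1/20) * A⁻¹ :=
      mul_le_mul_of_nonneg_right (by rw [e1'] at e1; exact e1) hIpos.le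
    have h2 : M * A * A⁻¹ ≤ (1/400) * A⁻¹ :=
      mul_le_mul_of_nonneg_right (le_trans e2 e2') hIpos.le
    have h3 : M * A * A⁻¹ = M := by rw [mul_assoc, mul_inv_cancel₀ hA.ne', mul_one]
    linarith [hIpos.le]
  have herr3 : |w' + (1/3) * A⁻¹| ≤ (1/20) * A⁻¹ := le_trans herr herr2
  have hw'abs : |w'| ≤ (23/60) * A⁻¹ := by
    have h := abs_le.1 herr3
    exact abs_le.2 ⟨by linarith [h.1], by linarith [h.2, hIpos.le]⟩
  -- numeric rpow bounds
  have h54 : ((5:ℝ)/4) ^ ((2:ℝ)/3) ≤ 7/6 := by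
    have key : (((5:ℝ)/4) ^ ((2:ℝ)/3)) ^ (3:ℕ) = ((5:ℝ)/4) ^ (2:ℕ) := by
      rw [← Real.rpow_natCast (((5:ℝ)/4) ^ ((2:ℝ)/3)) 3, ← Real.rpow_mul (by norm_num),
        ← Real.rpow_natCast ((5:ℝ)/4) 2]
      norm_num
    refine cube_le_aux (Real.rpow_nonneg (by norm_num) _) (by norm_num) ?_
    rw [key]; norm_num
  have h6425 : ((64:ℝ)/25) ^ ((1:ℝ)/3) ≤ 7/5 := by
    have key : (((64:ℝ)/25) ^ ((1:ℝ)/3)) ^ (3:ℕ) = 64/25 := by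
      rw [← Real.rpow_natCast (((64:ℝ)/25) ^ ((1:ℝ)/3)) 3, ← Real.rpow_mul (by norm_num)]
      norm_num
    refine cube_le_aux (Real.rpow_nonneg (by norm_num) _) (by norm_num) ?_
    rw [key]; norm_num
  -- step B : t ≤ (7/6) A
  have ht32 : t ^ ((3:ℝ)/2) ≤ (5/4) * b := by nlinarith [abs_nonneg z]
  have htle : t ≤ (7/6) * A := by
    have e2 : (t ^ ((3:ℝ)/2)) ^ ((2:ℝ)/3) = t := by
      rw [← Real.rpow_mul ht.le]; norm_num
    calc t = (t ^ ((3:ℝ)/2)) ^ ((2:ℝ)/3) := e2.symm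
      _ ≤ ((5/4) * b) ^ ((2:ℝ)/3) :=
        Real.rpow_le_rpow (Real.rpow_nonneg ht.le _) ht32 (by norm_num)
      _ = ((5:ℝ)/4) ^ ((2:ℝ)/3) * A := Real.mul_rpow (by norm_num) hb.le
      _ ≤ (7/6) * A := mul_le_mul_of_nonneg_right h54 hA.le
  have htI : t * A⁻¹ ≤ 7/6 := by
    have h1 : t * A⁻¹ ≤ 7/6 * A * A⁻¹ := mul_le_mul_of_nonneg_right htle hIpos.le
    rw [mul_assoc, mul_inv_cancel₀ hA.ne', mul_one] at h1
    exact h1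
  have htw : t * |w'| ≤ 161/360 := by
    have h1 := mul_le_mul_of_nonneg_left hw'abs ht.le
    have h2 : t * (23/60 * A⁻¹) = 23/60 * (t * A⁻¹) := by ring
    rw [h2] at h1
    linarith
  -- denominator bound
  have hD : (1829/3600:ℝ) ≤ 1 + t * p * w' := by
    have hp0 : (0:ℝ) ≤ p := by linarith
    have h1 := mul_le_mul_of_nonneg_left (neg_abs_le w') (mul_nonneg ht.le hp0)
    have h2 := mul_le_mul_of_nonneg_right hp2 (mul_nonneg ht.le (abs_nonneg w'))
    linarith [htw, h1, h2]
  have hDpos : (0:ℝ) < 1 + t * p * w' := by linarith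
  -- step C : (t³+z²)^{1/3} ≤ (7/5) A
  have hs : (0:ℝ) < t^3 + z^2 := by positivity
  have ht3 : (t ^ ((3:ℝ)/2)) ^ (2:ℕ) = t ^ (3:ℕ) := by
    rw [← Real.rpow_natCast (t ^ ((3:ℝ)/2)) 2, ← Real.rpow_mul ht.le,
      ← Real.rpow_natCast t 3]
    norm_num
  have hsb : t^3 + z^2 ≤ (64/25) * b^2 := by
    have hXnn : (0:ℝ) ≤ t ^ ((3:ℝ)/2) := Real.rpow_nonneg ht.le _
    have h1 : ((4/5) * t ^ ((3:ℝ)/2) + (5/8) * |z|) * ((4/5) * t ^ ((3:ℝ)/2) + (5/8) * |z|)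
        ≤ b * b := mul_self_le_mul_self (by positivity) hlow
    have h2 : (16/25) * t^3 + (25/64) * z^2 ≤ b^2 := by
      nlinarith [h1, ht3, sq_abs z, mul_nonneg hXnn (abs_nonneg z)]
    nlinarith [pow_pos ht 3, h2]
  set S := (t^3 + z^2) ^ ((1:ℝ)/3) with hSdef
  have hSpos : (0:ℝ) < S := Real.rpow_pos_of_pos hs _
  have hS3 : S ≤ (7/5) * A := by
    calc S ≤ ((64/25) * b^2) ^ ((1:ℝ)/3) := Real.rpow_le_rpow hs.le hsb (by norm_num)
      _ = ((64:ℝ)/25) ^ ((1:ℝ)/3) * (b^2) ^ ((1:ℝ)/3) :=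
        Real.mul_rpow (by norm_num) (by positivity)
      _ = ((64:ℝ)/25) ^ ((1:ℝ)/3) * A := by
        congr 1
        rw [← Real.rpow_natCast b 2, ← Real.rpow_mul hb.le]
        norm_num [hAdef]
      _ ≤ (7/5) * A := mul_le_mul_of_nonneg_right h6425 hA.le
  have hSA : A⁻¹ ≤ (7/5) * S⁻¹ := by
    have h1 : A⁻¹ * S ≤ 7/5 := by
      rw [inv_mul_le_iff₀ hA]
      linarith
    calc A⁻¹ = (A⁻¹ * S) * S⁻¹ := by field_simp
      _ ≤ (7/5) * S⁻¹ := mul_le_mul_of_nonneg_right h1 (inv_nonneg.2 hSpos.le)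
  have hnum : |w'| ≤ (161/300) * S⁻¹ := by linarith [hw'abs, hSA, hIpos.le]
  -- conclude
  rw [show (-(1:ℝ)/3) = -((1:ℝ)/3) by norm_num, Real.rpow_neg hs.le, abs_div,
    abs_of_pos hDpos, div_le_iff₀ hDpos]
  nlinarith [hnum, hD,
    mul_nonneg (inv_nonneg.2 hSpos.le)
      (show (0:ℝ) ≤ 1 + t * p * w' - 1829/3600 by linarith),
    inv_nonneg.2 hSpos.le]
end
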